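/- For every T ∈ ℕ, the control operator W^T is a linear isomorphism of ℝ^T onto ℝ^T (i.e. the map f ↦ (u^f_{1,T},…,u^f_{T,T}) is bijective). -/
import Mathlib

/-- Solution `u^f` of the semi-infinite dynamical system:
`u_{n,t+1} + u_{n,t-1} - a_n u_{n+1,t} - a_{n-1} u_{n-1,t} - b_n u_{n,t} = 0` for `n ≥ 1`,
`u_{n,-1} = u_{n,0} = 0` for `n ≥ 1`, `u_{0,t} = f_t`.  `solS a b f n t = u_{n,t}`. -/
def solS (a b f : ℕ → ℝ) : ℕ → ℕ → ℝ
  | n, 0 => if n = 0 then f 0 else 0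
  | n, 1 =>
      if n = 0 then f 1
      else a n * solS a b f (n + 1) 0 + a (n - 1) * solS a b f (n - 1) 0
        + b n * solS a b f n 0
  | n, t + 2 =>
      if n = 0 then f (t + 2)
      else a n * solS a b f (n + 1) (t + 1) + a (n - 1) * solS a b f (n - 1) (t + 1)
        + b n * solS a b f n (t + 1) - solS a b f n t
  termination_by n t => t

/-- Extension of a finite control `f = (f_0,…,f_{T-1})` by zero. -/
def ctrl (T : ℕ) (f : Fin T → ℝ) : ℕ → ℝ := fun t => if h : t < T then f ⟨t, h⟩ else 0

lemma solS_zero (a b f : ℕ → ℝ) : ∀ t, solS a b f 0 t = f t := by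
  intro t
  match t with
  | 0 => rw [solS]; simp
  | 1 => rw [solS]; simp
  | t+2 => rw [solS]; simp

lemma solS_speed (a b f : ℕ → ℝ) (j : ℕ) (hf : ∀ s < j, f s = 0) :
    ∀ t n, t < n + j → solS a b f n t = 0 := by
  intro t
  induction t using Nat.strong_induction_on with
  | _ t ih =>
    intro n ht
    match t with
    | 0 =>
      rw [solS]
      split
      · next h => exact hf 0 (by omega)
      · rfl
    | 1 =>
      rw [solS]
      split
      · next h => exact hf 1 (by omega)
      · next h =>
        rw [ih 0 (by omega) (n+1) (by omega), ih 0 (by omega) (n-1) (by omega),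
            ih 0 (by omega) n (by omega)]
        ring
    | t+2 =>
      rw [solS]
      split
      · next h => exact hf (t+2) (by omega)
      · next h =>
        rw [ih (t+1) (by omega) (n+1) (by omega), ih (t+1) (by omega) (n-1) (by omega),
            ih (t+1) (by omega) n (by omega), ih t (by omega) n (by omega)]
        ring

lemma solS_lead (a b f : ℕ → ℝ) (j : ℕ) (hf : ∀ s < j, f s = 0) :
    ∀ n, solS a b f n (n + j) = (∏ k ∈ Finset.range n, a k) * f j := by
  intro n
  induction n with
  | zero => simp [solS_zero]
  | succ n ih =>
    rcases Nat.eq_zero_or_pos (n + j) with h | h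
    · obtain ⟨hn, hj⟩ : n = 0 ∧ j = 0 := by omega
      subst hn; subst hj
      rw [show (0+1)+0 = 1 from rfl, solS]
      rw [solS, solS, solS]
      simp
    · obtain ⟨m, hm⟩ : ∃ m, n + j = m + 1 := ⟨n + j - 1, by omega⟩
      rw [show n + 1 + j = m + 2 by omega, solS]
      simp only [Nat.add_sub_cancel, if_neg (Nat.succ_ne_zero n)]
      rw [show m + 1 = n + j from hm.symm]
      rw [solS_speed a b f j hf (n+j) (n+2) (by omega),
          solS_speed a b f j hf (n+j) (n+1) (by omega),
          solS_speed a b f j hf m (n+1) (by omega), ih]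
      rw [Finset.prod_range_succ]
      ring

lemma solS_combo (a b f g : ℕ → ℝ) (c d : ℝ) :
    ∀ t n, solS a b (fun s => c * f s + d * g s) n t
      = c * solS a b f n t + d * solS a b g n t := by
  intro t
  induction t using Nat.strong_induction_on with
  | _ t ih =>
    intro n
    match t with
    | 0 =>
      rw [solS, solS, solS]
      by_cases hn : n = 0 <;> simp [hn]
    | 1 =>
      rw [solS, solS, solS]
      by_cases hn : n = 0
      · simp [hn, solS_zero]
      · simp only [hn, if_false]
        rw [solS, solS, solS, solS, solS, solS, solS, solS, solS]
        split_ifs <;> ring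
    | t+2 =>
      rw [solS, solS, solS]
      by_cases hn : n = 0
      · simp [hn]
      · simp only [hn, if_false]
        rw [ih (t+1) (by omega), ih (t+1) (by omega), ih (t+1) (by omega), ih t (by omega)]
        ring

noncomputable def Wmap (a b : ℕ → ℝ) (T : ℕ) : (Fin T → ℝ) →ₗ[ℝ] (Fin T → ℝ) where
  toFun f := fun n => solS a b (ctrl T f) ((n : ℕ) + 1) T
  map_add' f g := by
    funext n
    show solS a b (ctrl T (f + g)) ((n:ℕ)+1) T
      = solS a b (ctrl T f) ((n:ℕ)+1) T + solS a b (ctrl T g) ((n:ℕ)+1) T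
    have h : ctrl T (f + g) = fun s => 1 * ctrl T f s + 1 * ctrl T g s := by
      funext s
      simp only [ctrl, one_mul]
      split <;> simp
    rw [h, solS_combo]
    simp
  map_smul' c f := by
    funext n
    show solS a b (ctrl T (c • f)) ((n:ℕ)+1) T = c * solS a b (ctrl T f) ((n:ℕ)+1) T
    have h : ctrl T (c • f) = fun s => c * ctrl T f s + 0 * ctrl T f s := by
      funext s
      simp only [ctrl, zero_mul, add_zero]
      split <;> simp
    rw [h, solS_combo]
    simp

/-- the control operator `W^T : ℝ^T → ℝ^T`,
`f ↦ (u^f_{1,T},…,u^f_{T,T})`, is a bijection. -/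
theorem control_operator_bijective
    (a b : ℕ → ℝ) (ha0 : a 0 = 1) (hapos : ∀ n, 0 < a n) (T : ℕ) :
    Function.Bijective
      (fun f : Fin T → ℝ => fun n : Fin T => solS a b (ctrl T f) ((n : ℕ) + 1) T) := by
  have hinj : Function.Injective (Wmap a b T) := by
    rw [← LinearMap.ker_eq_bot, LinearMap.ker_eq_bot']
    intro f hf
    have key : ∀ m, (hm : m < T) → f ⟨m, hm⟩ = 0 := by
      intro m
      induction m using Nat.strong_induction_on with
      | _ m ihm =>
        intro hm
        have hzero : ∀ s < m, ctrl T f s = 0 := by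
          intro s hs
          simp only [ctrl]
          split
          · exact ihm s hs _
          · rfl
        have hlead := solS_lead a b (ctrl T f) m hzero (T - m)
        rw [show (T - m) + m = T by omega] at hlead
        have hW : solS a b (ctrl T f) ((T - m - 1 : ℕ) + 1) T = 0 := by
          have := congrFun hf ⟨T - m - 1, by omega⟩
          simpa [Wmap] using this
        rw [show (T - m - 1) + 1 = T - m by omega] at hW
        rw [hW] at hlead
        have hprod : (0:ℝ) < ∏ k ∈ Finset.range (T - m), a k :=
          Finset.prod_pos (fun k _ => hapos k)
        have hcm : ctrl T f m = 0 := by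
          rcases mul_eq_zero.mp hlead.symm with h | h
          · exact absurd h (ne_of_gt hprod)
          · exact h
        rwa [ctrl, dif_pos hm] at hcm
    funext j
    exact key j.val j.isLt
  have hsurj : Function.Surjective (Wmap a b T) :=
    (LinearMap.injective_iff_surjective).mp hinj
  exact ⟨hinj, hsurj⟩
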